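/- For all sufficiently large n the following holds: for all integers N, N' ∈ [n, 2n] and p ∈ {1,…,N}, |T(N,N',p)| ≤ n²·(log n)^5. -/

import Mathlib

open Filter

noncomputable section

/-- The representative in `{1,…,N}` of `s + i*p` modulo `N`. -/
def idx (N s p i : ℕ) : ℕ := (s + i * p - 1) % N + 1

/-- `M_N = ⌈(2+β) log₂ N⌉`. -/
def MN (β : ℝ) (N : ℕ) : ℕ := Nat.ceil ((2 + β) * Real.logb 2 N)

/-- The progression `{s + i·p (mod N) : 1 ≤ i ≤ M_N}`. -/
def Prog (β : ℝ) (s p N : ℕ) : Finset ℕ :=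
  (Finset.Icc 1 (MN β N)).image fun i => idx N s p i

/-- `T(N,N',p)`: the set of triples `(s,s',p')`, `s ∈ [1,N]`, `s',p' ∈ [1,N']`, whose
associated progressions intersect in exactly one point. -/
def T (β : ℝ) (N N' p : ℕ) : Finset (ℕ × ℕ × ℕ) :=
  ((Finset.Icc 1 N) ×ˢ (Finset.Icc 1 N') ×ˢ (Finset.Icc 1 N')).filter
    fun z => (Prog β z.1 p N ∩ Prog β z.2.1 z.2.2 N').card = 1

lemma idx_inj {N s₁ s₂ p i : ℕ} (h1 : s₁ ∈ Finset.Icc 1 N) (h2 : s₂ ∈ Finset.Icc 1 N)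
    (h : idx N s₁ p i = idx N s₂ p i) : s₁ = s₂ := by
  simp only [Finset.mem_Icc] at h1 h2
  unfold idx at h
  rw [show s₁ + i * p - 1 = s₁ - 1 + i * p by omega,
      show s₂ + i * p - 1 = s₂ - 1 + i * p by omega] at h
  have heq : (s₁ - 1 + i * p) % N = (s₂ - 1 + i * p) % N := by omega
  have hm : s₁ - 1 ≡ s₂ - 1 [MOD N] := Nat.ModEq.add_right_cancel' (i * p) heq
  have h' : (s₁ - 1) % N = (s₂ - 1) % N := hm
  rw [Nat.mod_eq_of_lt (by omega), Nat.mod_eq_of_lt (by omega)] at h'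
  omega

open Classical in
/-- Witness-extraction map for the injection argument. -/
noncomputable def wit (β : ℝ) (N N' p : ℕ) (z : ℕ × ℕ × ℕ) : ℕ × ℕ × ℕ × ℕ :=
  if h : ∃ i, ∃ j, i ∈ Finset.Icc 1 (MN β N) ∧ j ∈ Finset.Icc 1 (MN β N') ∧
      idx N z.1 p i = idx N' z.2.1 z.2.2 j
  then (z.1, h.choose, h.choose_spec.choose, z.2.2) else 0

lemma T_mem_exists {β : ℝ} {N N' p : ℕ} {z : ℕ × ℕ × ℕ} (hz : z ∈ T β N N' p) :
    ∃ i, ∃ j, i ∈ Finset.Icc 1 (MN β N) ∧ j ∈ Finset.Icc 1 (MN β N') ∧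
      idx N z.1 p i = idx N' z.2.1 z.2.2 j := by
  rw [T, Finset.mem_filter] at hz
  have hpos : 0 < (Prog β z.1 p N ∩ Prog β z.2.1 z.2.2 N').card := by omega
  obtain ⟨x, hx⟩ := Finset.card_pos.mp hpos
  rw [Finset.mem_inter] at hx
  obtain ⟨i, hi, hix⟩ := Finset.mem_image.mp hx.1
  obtain ⟨j, hj, hjx⟩ := Finset.mem_image.mp hx.2
  exact ⟨i, j, hi, hj, by rw [hix, hjx]⟩

lemma T_card_le (β : ℝ) (N N' p : ℕ) (hN' : 1 ≤ N') :
    (T β N N' p).card ≤ N * (MN β N * (MN β N' * N')) := by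
  have key : (T β N N' p).card ≤
      (Finset.Icc 1 N ×ˢ (Finset.Icc 1 (MN β N) ×ˢ (Finset.Icc 1 (MN β N') ×ˢ
        Finset.Icc 1 N'))).card := by
    apply Finset.card_le_card_of_injOn (wit β N N' p)
    · intro z hz
      have hex := T_mem_exists hz
      rw [T, Finset.mem_coe, Finset.mem_filter, Finset.mem_product, Finset.mem_product] at hz
      rw [wit, dif_pos hex]
      have hspec := hex.choose_spec.choose_spec
      simp only [Finset.mem_coe, Finset.mem_product]
      exact ⟨hz.1.1, hspec.1, hspec.2.1, hz.1.2.2⟩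
    · intro z₁ hz₁ z₂ hz₂ heq
      simp only [Finset.mem_coe] at hz₁ hz₂
      have hex₁ := T_mem_exists hz₁
      have hex₂ := T_mem_exists hz₂
      rw [wit, dif_pos hex₁, wit, dif_pos hex₂] at heq
      simp only [Prod.mk.injEq] at heq
      obtain ⟨hs, hi, hj, hp'⟩ := heq
      have e1 := hex₁.choose_spec.choose_spec.2.2
      have e2 := hex₂.choose_spec.choose_spec.2.2
      rw [T, Finset.mem_filter, Finset.mem_product, Finset.mem_product] at hz₁ hz₂
      rw [hj, hi, hs, hp'] at e1
      have hidx := e1.symm.trans e2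
      have hs' : z₁.2.1 = z₂.2.1 := idx_inj hz₁.1.2.1 hz₂.1.2.1 hidx
      exact Prod.ext hs (Prod.ext hs' hp')
  simpa [Finset.card_product, Nat.card_Icc] using key

lemma MN_le_of (β : ℝ) (hβ : 0 < β) (hβ1 : β < 1) {N n : ℕ} (hN1 : 1 ≤ N) (hN2 : N ≤ 2 * n)
    (hn : 1 ≤ n) (hL : 8 ≤ Real.log n) : (MN β N : ℝ) ≤ 10 * Real.log n := by
  set L := Real.log n with hLdef
  have hlog2 : (0.6931471803 : ℝ) < Real.log 2 := Real.log_two_gt_d9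
  have hlog2' : Real.log 2 < 0.6931471808 := Real.log_two_lt_d9
  have hN0 : (0 : ℝ) < (N : ℝ) := by exact_mod_cast hN1
  have hlogN : Real.log N ≤ Real.log 2 + L := by
    have h1 : Real.log N ≤ Real.log ((2 * n : ℕ) : ℝ) :=
      Real.log_le_log hN0 (by exact_mod_cast hN2)
    have h2 : Real.log ((2 * n : ℕ) : ℝ) = Real.log 2 + L := by
      push_cast
      rw [Real.log_mul (by norm_num) (by positivity)]
    linarith
  have hlb : Real.logb 2 N ≤ 2 * (1 + L) := by
    rw [Real.logb, div_le_iff₀ (by linarith)]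
    nlinarith
  have hlb0 : 0 ≤ (2 + β) * Real.logb 2 N :=
    mul_nonneg (by linarith) (Real.logb_nonneg one_lt_two (by exact_mod_cast hN1))
  have hceil : (MN β N : ℝ) < (2 + β) * Real.logb 2 N + 1 := Nat.ceil_lt_add_one hlb0
  have hlbnn : 0 ≤ Real.logb 2 N := Real.logb_nonneg one_lt_two (by exact_mod_cast hN1)
  have : (2 + β) * Real.logb 2 N ≤ 3 * (2 * (1 + L)) := by nlinarith
  linarith

theorem T_card_bound (β : ℝ) (hβ : 0 < β) (hβ1 : β < 1) :
    ∀ᶠ n : ℕ in atTop, ∀ N N' : ℕ, N ∈ Finset.Icc n (2 * n) → N' ∈ Finset.Icc n (2 * n) →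
      ∀ p ∈ Finset.Icc 1 N,
        ((T β N N' p).card : ℝ) ≤ (n : ℝ) ^ 2 * (Real.log n) ^ 5 := by
  have hlogtend : Tendsto (fun n : ℕ => Real.log n) atTop atTop :=
    Real.tendsto_log_atTop.comp tendsto_natCast_atTop_atTop
  filter_upwards [hlogtend.eventually (eventually_ge_atTop (8 : ℝ)),
    eventually_ge_atTop 1] with n hL hn1 N N' hN hN' p hp
  rw [Finset.mem_Icc] at hN hN'
  have hN1 : 1 ≤ N := le_trans hn1 hN.1
  have hN'1 : 1 ≤ N' := le_trans hn1 hN'.1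
  set L := Real.log n with hLdef
  have hcard : ((T β N N' p).card : ℝ) ≤ (N : ℝ) * ((MN β N : ℝ) * ((MN β N' : ℝ) * (N' : ℝ))) := by
    have := T_card_le β N N' p hN'1
    exact_mod_cast this
  have m1 : (MN β N : ℝ) ≤ 10 * L := MN_le_of β hβ hβ1 hN1 hN.2 hn1 hL
  have m2 : (MN β N' : ℝ) ≤ 10 * L := MN_le_of β hβ hβ1 hN'1 hN'.2 hn1 hL
  have hNle : (N : ℝ) ≤ 2 * (n : ℝ) := by exact_mod_cast hN.2
  have hN'le : (N' : ℝ) ≤ 2 * (n : ℝ) := by exact_mod_cast hN'.2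
  have hL0 : (0 : ℝ) ≤ L := by linarith
  have step : (N : ℝ) * ((MN β N : ℝ) * ((MN β N' : ℝ) * (N' : ℝ)))
      ≤ (2 * n) * ((10 * L) * ((10 * L) * (2 * n))) := by
    gcongr <;> positivity
  have final : (2 * (n : ℝ)) * ((10 * L) * ((10 * L) * (2 * n))) ≤ (n : ℝ) ^ 2 * L ^ 5 := by
    have hn0 : (0 : ℝ) ≤ (n : ℝ) := by positivity
    have hL3 : (400 : ℝ) ≤ L ^ 3 := by
      nlinarith [mul_nonneg (sub_nonneg.2 hL) (sq_nonneg L), sq_nonneg (L - 8)]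
    nlinarith [mul_nonneg (mul_nonneg (sq_nonneg (n : ℝ)) (sq_nonneg L))
      (sub_nonneg.2 hL3)]
  linarith
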